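/- arXiv:2106.12216 — 4 statements merged into one kernel-verified Lean document; each statement's English description precedes it below -/
import Mathlib

section
/- Let P satisfy ⟨Px,x⟩ ≥ ⟨x,x⟩ for all x and let δ_t = exp((log t)P) for t > 0. Then for every x ∈ ℝⁿ and t ≥ 1 one has |δ_t x| ≥ t|x|, and for every x ∈ ℝⁿ and 0 < t ≤ 1 one has |δ_t x| ≤ t|x|. -/
open Matrix

attribute [local instance] Matrix.linftyOpNormedRing Matrix.linftyOpNormedAlgebra

section aux
variable {n : ℕ} (P : Matrix (Fin n) (Fin n) ℝ) (x : Fin n → ℝ)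

lemma hasDerivAt_u (s : ℝ) :
    HasDerivAt (fun s : ℝ => (NormedSpace.exp (s • P)).mulVec x)
      (P.mulVec ((NormedSpace.exp (s • P)).mulVec x)) s := by
  have h := hasDerivAt_exp_smul_const' (𝕂 := ℝ) P s
  let L : Matrix (Fin n) (Fin n) ℝ →ₗ[ℝ] (Fin n → ℝ) :=
    { toFun := fun M => M.mulVec x
      map_add' := fun A B => Matrix.add_mulVec A B x
      map_smul' := fun c A => (Matrix.smul_mulVec c A x) }
  have := (L.toContinuousLinearMap.hasFDerivAt (x := NormedSpace.exp (s • P))).comp_hasDerivAt s h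
  rw [Matrix.mulVec_mulVec]; exact this

lemma hasDerivAt_f (s : ℝ) :
    HasDerivAt (fun s : ℝ => (NormedSpace.exp (s • P)).mulVec x ⬝ᵥ (NormedSpace.exp (s • P)).mulVec x)
      (2 * (P.mulVec ((NormedSpace.exp (s • P)).mulVec x) ⬝ᵥ (NormedSpace.exp (s • P)).mulVec x)) s := by
  set u : ℝ → (Fin n → ℝ) := fun s => (NormedSpace.exp (s • P)).mulVec x with hu
  set v : Fin n → ℝ := P.mulVec (u s) with hv
  have hU : HasDerivAt u v s := hasDerivAt_u P x s
  have hcomp : ∀ i, HasDerivAt (fun s => u s i) (v i) s := by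
    intro i
    have := (ContinuousLinearMap.proj (R := ℝ) (φ := fun _ : Fin n => ℝ) i).hasFDerivAt.comp_hasDerivAt s hU
    simpa [Function.comp_def] using this
  have hsum : HasDerivAt (fun s => ∑ i, u s i * u s i) (∑ i, (v i * u s i + u s i * v i)) s :=
    HasDerivAt.fun_sum (fun i _ => (hcomp i).mul (hcomp i))
  have : (∑ i, (v i * u s i + u s i * v i)) = 2 * (v ⬝ᵥ u s) := by
    simp [dotProduct, Finset.sum_add_distrib, mul_comm, two_mul]
  rw [← this]
  simpa [dotProduct] using hsum

lemma key : ∀ s : ℝ, (∀ x : Fin n → ℝ, x ⬝ᵥ x ≤ P.mulVec x ⬝ᵥ x) →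
    (0 ≤ s → Real.exp (2*s) * (x ⬝ᵥ x) ≤
      (NormedSpace.exp (s • P)).mulVec x ⬝ᵥ (NormedSpace.exp (s • P)).mulVec x) ∧
    (s ≤ 0 → (NormedSpace.exp (s • P)).mulVec x ⬝ᵥ (NormedSpace.exp (s • P)).mulVec x ≤
      Real.exp (2*s) * (x ⬝ᵥ x)) := by
  intro s hP
  set f : ℝ → ℝ := fun s => (NormedSpace.exp (s • P)).mulVec x ⬝ᵥ (NormedSpace.exp (s • P)).mulVec x with hf
  set g : ℝ → ℝ := fun s => Real.exp (-(2*s)) * f s with hg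
  have hG : ∀ t : ℝ, HasDerivAt g
      ((-2 * Real.exp (-(2*t))) * f t + Real.exp (-(2*t)) * (2 * (P.mulVec ((NormedSpace.exp (t • P)).mulVec x) ⬝ᵥ (NormedSpace.exp (t • P)).mulVec x))) t := by
    intro t
    have h1 : HasDerivAt (fun t : ℝ => Real.exp (-(2*t))) (-2 * Real.exp (-(2*t))) t := by
      have := (Real.hasDerivAt_exp (-(2*t))).comp t (((hasDerivAt_id t).const_mul (2:ℝ)).neg)
      simpa [mul_comm, Function.comp_def] using this
    exact h1.mul (hasDerivAt_f P x t)
  have hmono : Monotone g := by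
    apply monotone_of_deriv_nonneg
    · exact fun t => (hG t).differentiableAt
    · intro t
      rw [(hG t).deriv]
      have h2 : f t ≤ P.mulVec ((NormedSpace.exp (t • P)).mulVec x) ⬝ᵥ (NormedSpace.exp (t • P)).mulVec x :=
        hP _
      have h3 : (0:ℝ) < Real.exp (-(2*t)) := Real.exp_pos _
      nlinarith [h3]
  have hg0 : g 0 = x ⬝ᵥ x := by
    simp [hg, hf, Matrix.one_mulVec]
  have hexp : ∀ t : ℝ, Real.exp (2*t) * Real.exp (-(2*t)) = 1 := by
    intro t; rw [← Real.exp_add]; simp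
  constructor
  · intro hs
    have h4 := hmono hs
    rw [hg0] at h4
    have h5 : (0:ℝ) < Real.exp (2*s) := Real.exp_pos _
    have h6 := hexp s
    simp only [hg] at h4
    have h7 : Real.exp (2*s) * (Real.exp (-(2*s)) * f s) = f s := by
      rw [← mul_assoc, h6, one_mul]
    have h8 := mul_le_mul_of_nonneg_left h4 h5.le
    show Real.exp (2*s) * (x ⬝ᵥ x) ≤ f s
    linarith
  · intro hs
    have h4 := hmono hs
    rw [hg0] at h4
    have h5 : (0:ℝ) < Real.exp (2*s) := Real.exp_pos _
    have h6 := hexp s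
    simp only [hg] at h4
    have h7 : Real.exp (2*s) * (Real.exp (-(2*s)) * f s) = f s := by
      rw [← mul_assoc, h6, one_mul]
    have h8 := mul_le_mul_of_nonneg_left h4 h5.le
    show f s ≤ Real.exp (2*s) * (x ⬝ᵥ x)
    linarith
end aux

/-- For `P` with `⟨Px,x⟩ ≥ ⟨x,x⟩` and `δ_t = exp((log t) P)`:
`|δ_t x| ≥ t |x|` for `t ≥ 1` and `|δ_t x| ≤ t |x|` for `0 < t ≤ 1`,
where `|v| = √(v ⬝ v)` is the Euclidean norm. -/
theorem dilation_norm_bounds (n : ℕ) (P : Matrix (Fin n) (Fin n) ℝ)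
    (hP : ∀ x : Fin n → ℝ, x ⬝ᵥ x ≤ P.mulVec x ⬝ᵥ x)
    (δ : ℝ → Matrix (Fin n) (Fin n) ℝ)
    (hδ : ∀ t, δ t = NormedSpace.exp (Real.log t • P)) :
    (∀ (x : Fin n → ℝ) (t : ℝ), 1 ≤ t →
      t * Real.sqrt (x ⬝ᵥ x) ≤ Real.sqrt ((δ t).mulVec x ⬝ᵥ (δ t).mulVec x)) ∧
    (∀ (x : Fin n → ℝ) (t : ℝ), 0 < t → t ≤ 1 →
      Real.sqrt ((δ t).mulVec x ⬝ᵥ (δ t).mulVec x) ≤ t * Real.sqrt (x ⬝ᵥ x)) := by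
  constructor
  · intro x t ht
    have ht0 : (0:ℝ) < t := lt_of_lt_of_le one_pos ht
    have hs : 0 ≤ Real.log t := Real.log_nonneg ht
    have h := (key P x (Real.log t) hP).1 hs
    rw [hδ t]
    have hexp : Real.exp (2 * Real.log t) = t * t := by
      rw [two_mul, Real.exp_add, Real.exp_log ht0]
    rw [hexp] at h
    have := Real.sqrt_le_sqrt h
    rwa [Real.sqrt_mul (mul_self_nonneg t), Real.sqrt_mul_self ht0.le] at this
  · intro x t ht0 ht
    have hs : Real.log t ≤ 0 := Real.log_nonpos ht0.le ht
    have h := (key P x (Real.log t) hP).2 hs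
    rw [hδ t]
    have hexp : Real.exp (2 * Real.log t) = t * t := by
      rw [two_mul, Real.exp_add, Real.exp_log ht0]
    rw [hexp] at h
    have := Real.sqrt_le_sqrt h
    rwa [Real.sqrt_mul (mul_self_nonneg t), Real.sqrt_mul_self ht0.le] at this
end

section
/- The norm function ρ associated with δ_t = t^P is subadditive: ρ(x+y) ≤ ρ(x) + ρ(y) for all x, y ∈ ℝⁿ, and symmetric: ρ(−x) = ρ(x). -/
open Matrix

attribute [local instance] Matrix.linftyOpNormedRing Matrix.linftyOpNormedAlgebra

namespace RhoSubaddAux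

open NormedSpace

variable {n : ℕ}

/-- `A ↦ A.mulVec x` as a continuous linear map. -/
noncomputable def mulVecCLM (x : Fin n → ℝ) :
    Matrix (Fin n) (Fin n) ℝ →L[ℝ] (Fin n → ℝ) :=
  LinearMap.toContinuousLinearMap
    { toFun := fun A => A.mulVec x
      map_add' := fun A B => Matrix.add_mulVec A B x
      map_smul' := fun c A => Matrix.smul_mulVec c A x }

noncomputable def v (P : Matrix (Fin n) (Fin n) ℝ) (x : Fin n → ℝ) (τ : ℝ) :
    Fin n → ℝ :=
  (exp (τ • P)).mulVec x

noncomputable def f (P : Matrix (Fin n) (Fin n) ℝ) (x : Fin n → ℝ) (τ : ℝ) : ℝ :=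
  v P x τ ⬝ᵥ v P x τ

lemma hasDerivAt_v (P : Matrix (Fin n) (Fin n) ℝ) (x : Fin n → ℝ) (τ : ℝ) :
    HasDerivAt (v P x) (P.mulVec (v P x τ)) τ := by
  have h := hasDerivAt_exp_smul_const' (𝕂 := ℝ) P τ
  have h2 := (mulVecCLM x).hasFDerivAt.comp_hasDerivAt τ h
  have : (mulVecCLM x) (P * exp (τ • P)) = P.mulVec (v P x τ) := by
    simp [mulVecCLM, v, Matrix.mulVec_mulVec]
  erw [this] at h2
  exact h2

lemma hasDerivAt_f (P : Matrix (Fin n) (Fin n) ℝ) (x : Fin n → ℝ) (τ : ℝ) :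
    HasDerivAt (f P x) (2 * (P.mulVec (v P x τ) ⬝ᵥ v P x τ)) τ := by
  have hv : ∀ i : Fin n, HasDerivAt (fun τ => v P x τ i) (P.mulVec (v P x τ) i) τ :=
    fun i => hasDerivAt_pi.1 (hasDerivAt_v P x τ) i
  have hsum : HasDerivAt (fun τ => ∑ i, v P x τ i * v P x τ i)
      (∑ i, (P.mulVec (v P x τ) i * v P x τ i + v P x τ i * P.mulVec (v P x τ) i)) τ :=
    HasDerivAt.fun_sum fun i _ => (hv i).mul (hv i)
  have heq : (fun τ => ∑ i, v P x τ i * v P x τ i) = f P x := by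
    funext τ; simp [f, dotProduct]
  rw [heq] at hsum
  convert hsum using 1
  simp only [dotProduct, Finset.mul_sum, Finset.sum_add_distrib]
  rw [← Finset.sum_add_distrib]
  congr 1; funext i; ring

lemma f_nonneg (P : Matrix (Fin n) (Fin n) ℝ) (x : Fin n → ℝ) (τ : ℝ) :
    0 ≤ f P x τ := by
  have : f P x τ = ∑ i, v P x τ i * v P x τ i := rfl
  rw [this]
  exact Finset.sum_nonneg fun i _ => mul_self_nonneg _

lemma v_ne_zero (P : Matrix (Fin n) (Fin n) ℝ) {x : Fin n → ℝ} (hx : x ≠ 0) (τ : ℝ) :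
    v P x τ ≠ 0 := by
  intro h
  apply hx
  have hc : Commute ((-τ) • P) (τ • P) := ((Commute.refl P).smul_left _).smul_right _
  have hinv : exp ((-τ) • P) * exp (τ • P) = 1 := by
    erw [← exp_add_of_commute hc, show (-τ) • P + τ • P = (0 : Matrix (Fin n) (Fin n) ℝ) by
      rw [← add_smul]; simp, exp_zero]
  have hxx : (exp ((-τ) • P)).mulVec (v P x τ) = x := by
    show (exp ((-τ) • P)).mulVec ((exp (τ • P)).mulVec x) = x
    rw [Matrix.mulVec_mulVec, hinv, Matrix.one_mulVec]
  rw [h, Matrix.mulVec_zero] at hxx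
  exact hxx.symm

lemma f_pos (P : Matrix (Fin n) (Fin n) ℝ) {x : Fin n → ℝ} (hx : x ≠ 0) (τ : ℝ) :
    0 < f P x τ := by
  have hv := v_ne_zero P hx τ
  obtain ⟨i, hi⟩ := Function.ne_iff.1 hv
  have hle : v P x τ i * v P x τ i ≤ f P x τ := by
    have : f P x τ = ∑ j, v P x τ j * v P x τ j := rfl
    rw [this]
    exact Finset.single_le_sum (fun j _ => mul_self_nonneg (v P x τ j)) (Finset.mem_univ i)
  have hpos : 0 < v P x τ i * v P x τ i := mul_self_pos.2 (by simpa using hi)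
  linarith

/-- `τ ↦ e^{-2τ} f(τ)` is monotone. -/
lemma g_mono (P : Matrix (Fin n) (Fin n) ℝ)
    (hP : ∀ x : Fin n → ℝ, x ⬝ᵥ x ≤ P.mulVec x ⬝ᵥ x) (x : Fin n → ℝ) :
    Monotone (fun τ => Real.exp (-2 * τ) * f P x τ) := by
  have hd : ∀ τ : ℝ, HasDerivAt (fun τ => Real.exp (-2 * τ) * f P x τ)
      (Real.exp (-2 * τ) * (2 * (P.mulVec (v P x τ) ⬝ᵥ v P x τ) - 2 * f P x τ)) τ := by
    intro τ
    have hlin : HasDerivAt (fun τ : ℝ => -2 * τ) (-2) τ := by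
      simpa using (hasDerivAt_id τ).const_mul (-2 : ℝ)
    have he : HasDerivAt (fun τ : ℝ => Real.exp (-2 * τ)) (Real.exp (-2 * τ) * -2) τ :=
      (Real.hasDerivAt_exp (-2 * τ)).comp τ hlin
    have := he.mul (hasDerivAt_f P x τ)
    refine this.congr_deriv ?_
    ring
  apply monotone_of_deriv_nonneg (fun τ => (hd τ).differentiableAt)
  intro τ
  rw [(hd τ).deriv]
  have h1 : f P x τ ≤ P.mulVec (v P x τ) ⬝ᵥ v P x τ := hP (v P x τ)
  have h2 : (0:ℝ) < Real.exp (-2 * τ) := Real.exp_pos _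
  nlinarith

lemma f_strictMono (P : Matrix (Fin n) (Fin n) ℝ)
    (hP : ∀ x : Fin n → ℝ, x ⬝ᵥ x ≤ P.mulVec x ⬝ᵥ x) {x : Fin n → ℝ} (hx : x ≠ 0) :
    StrictMono (f P x) := by
  intro σ τ h
  have hg : Real.exp (-2 * σ) * f P x σ ≤ Real.exp (-2 * τ) * f P x τ :=
    g_mono P hP x h.le
  have hfτ : 0 < f P x τ := f_pos P hx τ
  have hab : Real.exp (-2 * τ) < Real.exp (-2 * σ) := Real.exp_lt_exp.2 (by linarith)
  have h2 : (0:ℝ) < Real.exp (-2 * σ) := Real.exp_pos _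
  have h3 : (0:ℝ) < Real.exp (-2 * τ) := Real.exp_pos _
  nlinarith [f_nonneg P x σ]

/-- Gronwall-type bound: for `τ ≤ 0`, `f τ ≤ e^{2τ} f 0`. -/
lemma f_le (P : Matrix (Fin n) (Fin n) ℝ)
    (hP : ∀ x : Fin n → ℝ, x ⬝ᵥ x ≤ P.mulVec x ⬝ᵥ x) (x : Fin n → ℝ) {τ : ℝ}
    (hτ : τ ≤ 0) : f P x τ ≤ Real.exp (2 * τ) * f P x 0 := by
  have hg : Real.exp (-2 * τ) * f P x τ ≤ Real.exp (-2 * 0) * f P x 0 :=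
    g_mono P hP x hτ
  norm_num at hg
  have hid : Real.exp (2 * τ) * Real.exp (-2 * τ) = 1 := by
    rw [← Real.exp_add, show 2 * τ + -2 * τ = 0 by ring, Real.exp_zero]
  calc f P x τ = Real.exp (2 * τ) * Real.exp (-2 * τ) * f P x τ := by rw [hid, one_mul]
    _ = Real.exp (2 * τ) * (Real.exp (-2 * τ) * f P x τ) := by ring
    _ ≤ Real.exp (2 * τ) * f P x 0 := by
        apply mul_le_mul_of_nonneg_left _ (Real.exp_pos _).le
        rw [show (-2 : ℝ) * τ = -(2 * τ) by ring]
        exact hg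

/-- Euclidean norm vs dot product. -/
lemma sqrt_dot_eq_norm (w : Fin n → ℝ) :
    Real.sqrt (w ⬝ᵥ w) = ‖(WithLp.equiv 2 (Fin n → ℝ)).symm w‖ := by
  rw [EuclideanSpace.norm_eq]
  congr 1
  simp [dotProduct, Real.norm_eq_abs, sq_abs, sq]

end RhoSubaddAux

open RhoSubaddAux NormedSpace in
/-- The norm function `ρ` associated with `δ_t = exp((log t)P)` is subadditive
and symmetric: `ρ(x+y) ≤ ρ x + ρ y` and `ρ(-x) = ρ x`. -/
theorem rho_subadditive_symmetric (n : ℕ) (P : Matrix (Fin n) (Fin n) ℝ)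
    (hP : ∀ x : Fin n → ℝ, x ⬝ᵥ x ≤ P.mulVec x ⬝ᵥ x)
    (δ : ℝ → Matrix (Fin n) (Fin n) ℝ)
    (hδ : ∀ t, δ t = NormedSpace.exp (Real.log t • P))
    (ρ : (Fin n → ℝ) → ℝ) (hρ0 : ρ 0 = 0)
    (hρ : ∀ x : Fin n → ℝ, x ≠ 0 → 0 < ρ x ∧
      Real.sqrt ((δ (ρ x)⁻¹).mulVec x ⬝ᵥ (δ (ρ x)⁻¹).mulVec x) = 1) :
    (∀ x y : Fin n → ℝ, ρ (x + y) ≤ ρ x + ρ y) ∧ (∀ x : Fin n → ℝ, ρ (-x) = ρ x) := by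
  have hδv : ∀ (t : ℝ) (x : Fin n → ℝ), (δ t⁻¹).mulVec x = v P x (-Real.log t) := by
    intro t x
    rw [hδ, Real.log_inv]
    rfl
  have hf1 : ∀ x : Fin n → ℝ, x ≠ 0 → f P x (-Real.log (ρ x)) = 1 := by
    intro x hx
    have h := (hρ x hx).2
    rw [hδv] at h
    exact Real.sqrt_eq_one.1 h
  have hρnn : ∀ x : Fin n → ℝ, 0 ≤ ρ x := by
    intro x
    by_cases hx : x = 0
    · simp [hx, hρ0]
    · exact (hρ x hx).1.le
  constructor
  · -- subadditivity
    intro x y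
    by_cases hx : x = 0
    · simp [hx, hρ0, hρnn y]
    by_cases hy : y = 0
    · simp [hy, hρ0, hρnn x]
    by_cases hz : x + y = 0
    · rw [hz, hρ0]
      have := (hρ x hx).1
      have := (hρ y hy).1
      linarith
    set a := ρ x with ha
    set b := ρ y with hb
    set s := a + b with hs
    have ha0 : 0 < a := (hρ x hx).1
    have hb0 : 0 < b := (hρ y hy).1
    have hs0 : 0 < s := by linarith
    have key : ∀ (w : Fin n → ℝ), w ≠ 0 → ρ w ≤ s →
        Real.sqrt (f P w (-Real.log s)) ≤ ρ w / s := by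
      intro w hw hws
      set c := ρ w with hc
      have hc0 : 0 < c := (hρ w hw).1
      set u := v P w (-Real.log c) with hu
      set τ := Real.log c - Real.log s with hτdef
      have hτ : τ ≤ 0 := by
        have := Real.log_le_log hc0 hws
        rw [hτdef]; linarith
      have hc' : Commute (τ • P) ((-Real.log c) • P) :=
        ((Commute.refl P).smul_left _).smul_right _
      have hadd : τ • P + (-Real.log c) • P = (-Real.log s) • P := by
        rw [← add_smul, show τ + -Real.log c = -Real.log s by rw [hτdef]; ring]
      have hdecomp : v P w (-Real.log s) = v P u τ := by
        show (exp ((-Real.log s) • P)).mulVec w = (exp (τ • P)).mulVec u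
        rw [hu]
        show _ = (exp (τ • P)).mulVec ((exp ((-Real.log c) • P)).mulVec w)
        erw [Matrix.mulVec_mulVec, ← exp_add_of_commute hc', hadd]
        rfl
      have hu0 : f P u 0 = 1 := by
        have h0 : v P u 0 = u := by
          show (exp ((0:ℝ) • P)).mulVec u = u
          rw [zero_smul, exp_zero, Matrix.one_mulVec]
        show v P u 0 ⬝ᵥ v P u 0 = 1
        rw [h0, hu]
        exact hf1 w hw
      have hle := f_le P hP u hτ
      rw [hu0, mul_one] at hle
      have hfe : f P w (-Real.log s) = f P u τ := by
        show v P w (-Real.log s) ⬝ᵥ v P w (-Real.log s) = v P u τ ⬝ᵥ v P u τ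
        rw [hdecomp]
      rw [hfe]
      calc Real.sqrt (f P u τ) ≤ Real.sqrt (Real.exp (2 * τ)) := Real.sqrt_le_sqrt hle
        _ = Real.exp τ := by
            rw [show (2:ℝ) * τ = τ + τ by ring, Real.exp_add,
              Real.sqrt_mul_self (Real.exp_pos τ).le]
        _ = c / s := by
            rw [hτdef, Real.exp_sub, Real.exp_log hc0, Real.exp_log hs0]
    have hx' := key x hx (by rw [← ha]; linarith)
    have hy' := key y hy (by rw [← hb]; linarith)
    have htri : Real.sqrt (f P (x + y) (-Real.log s)) ≤
        Real.sqrt (f P x (-Real.log s)) + Real.sqrt (f P y (-Real.log s)) := by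
      have hsplit : v P (x + y) (-Real.log s) =
          v P x (-Real.log s) + v P y (-Real.log s) := by
        simp [v, Matrix.mulVec_add]
      have e1 : f P (x + y) (-Real.log s)
          = (v P x (-Real.log s) + v P y (-Real.log s)) ⬝ᵥ
            (v P x (-Real.log s) + v P y (-Real.log s)) := by
        show v P (x+y) (-Real.log s) ⬝ᵥ v P (x+y) (-Real.log s) = _
        rw [hsplit]
      rw [e1]
      rw [show f P x (-Real.log s) = v P x (-Real.log s) ⬝ᵥ v P x (-Real.log s) from rfl,
        show f P y (-Real.log s) = v P y (-Real.log s) ⬝ᵥ v P y (-Real.log s) from rfl]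
      rw [sqrt_dot_eq_norm, sqrt_dot_eq_norm, sqrt_dot_eq_norm]
      exact norm_add_le (WithLp.toLp 2 (v P x (-Real.log s))) (WithLp.toLp 2 (v P y (-Real.log s)))
    have hfz : f P (x + y) (-Real.log s) ≤ 1 := by
      have h1 : Real.sqrt (f P (x + y) (-Real.log s)) ≤ 1 := by
        have hsum1 : a / s + b / s = 1 := by field_simp; exact hs.symm
        calc Real.sqrt (f P (x + y) (-Real.log s))
            ≤ a / s + b / s := le_trans htri (add_le_add hx' hy')
          _ = 1 := hsum1
      have h0 := f_nonneg P (x + y) (-Real.log s)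
      nlinarith [Real.sq_sqrt h0, Real.sqrt_nonneg (f P (x + y) (-Real.log s))]
    by_contra hcon
    push_neg at hcon
    have hmono := f_strictMono P hP hz
      (show -Real.log (ρ (x + y)) < -Real.log s by
        have := Real.log_lt_log hs0 hcon
        linarith)
    rw [hf1 (x + y) hz] at hmono
    linarith
  · -- symmetry
    intro x
    by_cases hx : x = 0
    · simp [hx]
    have hnx : -x ≠ 0 := fun h => hx (by simpa using congrArg Neg.neg h)
    have hfneg : ∀ τ, f P (-x) τ = f P x τ := by
      intro τ
      show v P (-x) τ ⬝ᵥ v P (-x) τ = v P x τ ⬝ᵥ v P x τ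
      have : v P (-x) τ = -(v P x τ) := by simp [v, Matrix.mulVec_neg]
      rw [this]
      simp
    have h1 : f P x (-Real.log (ρ (-x))) = 1 := by
      rw [← hfneg]; exact hf1 (-x) hnx
    have h2 : f P x (-Real.log (ρ x)) = 1 := hf1 x hx
    have hinj := (f_strictMono P hP hx).injective (h1.trans h2.symm)
    have hlog : Real.log (ρ (-x)) = Real.log (ρ x) := by
      have := neg_injective hinj
      linarith [this]
    exact Real.log_injOn_pos (Set.mem_Ioi.2 (hρ (-x) hnx).1)
      (Set.mem_Ioi.2 (hρ x hx).1) hlog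
end

section
/- Let Φ be a bounded compactly supported function on ℝⁿ with ∫Φ = 1 and ∫ x^a Φ(x)dx = 0 for all multi-indices a with |a| = 1. Define K^{(k)}(x) = −Σ_{j=1}^k (−1)^j C(k,j) Φ^{(j)}(x), where Φ^{(j)} is the j-fold convolution of Φ with itself. Then ∫ K^{(k)}(x)dx = 1 and ∫ x^a K^{(k)}(x)dx = 0 for all multi-indices a with 1 ≤ |a| ≤ 2k − 1. -/
open MeasureTheory Finset
open Pointwise

/-- `convPow Φ j` is the `(j+1)`-fold self-convolution `Φ^{(j+1)}` of `Φ`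
(so `convPow Φ 0 = Φ`). -/
noncomputable def convPow {n : ℕ} (Φ : (Fin n → ℝ) → ℝ) : ℕ → (Fin n → ℝ) → ℝ
  | 0 => Φ
  | j + 1 => fun x => ∫ y : Fin n → ℝ, convPow Φ j y * Φ (x - y)

/-- `K^{(k)} = -∑_{j=1}^k (-1)^j C(k,j) Φ^{(j)}`. -/
noncomputable def Kkernel {n : ℕ} (Φ : (Fin n → ℝ) → ℝ) (k : ℕ) :
    (Fin n → ℝ) → ℝ :=
  fun x => -∑ j ∈ Finset.Icc 1 k, (-1 : ℝ) ^ j * (k.choose j) * convPow Φ (j - 1) x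

variable {n : ℕ}
abbrev E (n : ℕ) := Fin n → ℝ
noncomputable def P (a : Fin n → ℕ) (x : E n) : ℝ := ∏ i, x i ^ a i

lemma P_cont (a : Fin n → ℕ) : Continuous (P a) := by
  unfold P; exact continuous_finset_prod _ fun i _ => (continuous_apply i).pow _

lemma polyMulInt {h : E n → ℝ} (hi : Integrable h) (hs : HasCompactSupport h)
    (a : Fin n → ℕ) : Integrable (fun x => P a x * h x) := by
  obtain ⟨C, hC⟩ := hs.isCompact.exists_bound_of_continuousOn (P_cont a).continuousOn
  have heq : (fun x => P a x * h x)
      = fun x => (tsupport h).indicator (P a) x * h x := by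
    funext x
    by_cases hx : x ∈ tsupport h
    · rw [Set.indicator_of_mem hx]
    · rw [Set.indicator_of_notMem hx, image_eq_zero_of_notMem_tsupport hx, mul_zero, mul_zero]
  rw [heq]
  refine hi.bdd_mul (c := max C 0) ?_ (Filter.Eventually.of_forall fun x => ?_)
  · exact ((P_cont a).stronglyMeasurable.indicator (isClosed_tsupport h).measurableSet).aestronglyMeasurable
  · by_cases hx : x ∈ tsupport h
    · rw [Set.indicator_of_mem hx]; exact le_max_of_le_left (hC x hx)
    · rw [Set.indicator_of_notMem hx]; simp

lemma prodInt {f g : E n → ℝ} (hfi : Integrable f) (hfs : HasCompactSupport f)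
    (hgi : Integrable g) (hgs : HasCompactSupport g) (a : Fin n → ℕ) :
    Integrable (fun p : E n × E n => P a p.1 * (f p.2 * g (p.1 - p.2)))
      (volume.prod volume) := by
  have hm : AEStronglyMeasurable (fun p : E n × E n => f p.2 * g (p.1 - p.2))
      (volume.prod volume) := by
    have := hfi.aestronglyMeasurable.convolution_integrand
      (ContinuousLinearMap.mul ℝ ℝ) hgi.aestronglyMeasurable
    simpa using this
  have hK : IsCompact (tsupport g + tsupport f) := hgs.isCompact.add hfs.isCompact
  obtain ⟨C, hC⟩ := hK.exists_bound_of_continuousOn (P_cont a).continuousOn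
  have hbound : Integrable (fun p : E n × E n =>
      max C 0 * (‖f p.2‖ * ‖g (p.1 - p.2)‖)) (volume.prod volume) := by
    have := hfi.norm.convolution_integrand (ContinuousLinearMap.mul ℝ ℝ) hgi.norm
    simpa using this.const_mul (max C 0)
  refine hbound.mono' (((P_cont a).comp continuous_fst).aestronglyMeasurable.mul hm) ?_
  refine Filter.Eventually.of_forall fun p => ?_
  by_cases h0 : f p.2 * g (p.1 - p.2) = 0
  · simp only [norm_mul, h0]
    rcases mul_eq_zero.1 h0 with h | h <;> simp [h]
  · have hf0 : f p.2 ≠ 0 := fun h => h0 (by simp [h])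
    have hg0 : g (p.1 - p.2) ≠ 0 := fun h => h0 (by simp [h])
    have hp1 : p.1 ∈ tsupport g + tsupport f := by
      have : p.1 = (p.1 - p.2) + p.2 := by abel
      rw [this]
      exact Set.add_mem_add (subset_tsupport g hg0) (subset_tsupport f hf0)
    calc ‖P a p.1 * (f p.2 * g (p.1 - p.2))‖
        = ‖P a p.1‖ * (‖f p.2‖ * ‖g (p.1 - p.2)‖) := by simp [norm_mul]
      _ ≤ max C 0 * (‖f p.2‖ * ‖g (p.1 - p.2)‖) := by
          gcongr; exact le_max_of_le_left (hC _ hp1)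

lemma P_add (a : Fin n → ℕ) (y z : E n) :
    P a (z + y) = ∑ b ∈ Fintype.piFinset (fun i => range (a i + 1)),
      (∏ i, ((a i).choose (b i) : ℝ)) * (P b y * P (a - b) z) := by
  unfold P
  have : ∀ i, (z + y) i ^ a i
      = ∑ m ∈ range (a i + 1), y i ^ m * z i ^ (a i - m) * ((a i).choose m : ℝ) := by
    intro i
    rw [Pi.add_apply, add_comm (z i) (y i), add_pow]

  simp_rw [this]
  rw [Finset.prod_univ_sum]
  refine Finset.sum_congr rfl fun b _ => ?_
  rw [Finset.prod_mul_distrib, Finset.prod_mul_distrib]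
  simp [Pi.sub_apply]
  ring

lemma convMoment {f g : E n → ℝ} (hfi : Integrable f) (hfs : HasCompactSupport f)
    (hgi : Integrable g) (hgs : HasCompactSupport g) (a : Fin n → ℕ) :
    ∫ x : E n, P a x * (∫ y : E n, f y * g (x - y)) =
      ∑ b ∈ Fintype.piFinset (fun i => range (a i + 1)),
        (∏ i, ((a i).choose (b i) : ℝ)) *
          ((∫ y : E n, P b y * f y) * (∫ z : E n, P (a - b) z * g z)) := by
  have step1 : ∫ x : E n, P a x * (∫ y : E n, f y * g (x - y))
      = ∫ x : E n, ∫ y : E n, P a x * (f y * g (x - y)) := by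
    congr 1; funext x; rw [integral_const_mul]
  rw [step1, integral_integral_swap (prodInt hfi hfs hgi hgs a)]
  have step2 : ∀ y : E n, (∫ x : E n, P a x * (f y * g (x - y)))
      = ∫ z : E n, P a (z + y) * (f y * g z) := by
    intro y
    rw [← integral_add_right_eq_self (fun x => P a x * (f y * g (x - y))) y]
    simp
  simp_rw [step2]
  have step3 : ∀ y : E n, (∫ z : E n, P a (z + y) * (f y * g z))
      = ∑ b ∈ Fintype.piFinset (fun i => range (a i + 1)),
          ((∏ i, ((a i).choose (b i) : ℝ)) * (∫ z : E n, P (a - b) z * g z))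
            * (P b y * f y) := by
    intro y
    have : (fun z => P a (z + y) * (f y * g z))
        = fun z => ∑ b ∈ Fintype.piFinset (fun i => range (a i + 1)),
            ((∏ i, ((a i).choose (b i) : ℝ)) * (P b y * f y)) * (P (a - b) z * g z) := by
      funext z
      rw [P_add, Finset.sum_mul]
      exact Finset.sum_congr rfl fun b _ => by ring
    rw [this, integral_finset_sum _ (fun b _ => (polyMulInt hgi hgs (a - b)).const_mul _)]
    refine Finset.sum_congr rfl fun b _ => ?_
    rw [integral_const_mul]
    ring
  simp_rw [step3]
  rw [integral_finset_sum _ (fun b _ => (polyMulInt hfi hfs b).const_mul _)]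
  refine Finset.sum_congr rfl fun b _ => ?_
  rw [integral_const_mul]
  ring

lemma bddInt {h : E n → ℝ} (hm : Measurable h) (M : ℝ) (hb : ∀ x, |h x| ≤ M)
    (hs : HasCompactSupport h) : Integrable h := by
  have h1 : IntegrableOn h (tsupport h) := by
    refine Measure.integrableOn_of_bounded hs.isCompact.measure_lt_top.ne
      hm.aestronglyMeasurable (M := M) ?_
    exact Filter.Eventually.of_forall fun x => by simpa [Real.norm_eq_abs] using hb x
  exact (integrableOn_iff_integrable_of_support_subset (subset_tsupport h)).1 h1

lemma convPow_props {Φ : E n → ℝ} (hΦi : Integrable Φ) (hΦs : HasCompactSupport Φ) :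
    ∀ j, Integrable (convPow Φ j) ∧ HasCompactSupport (convPow Φ j) := by
  intro j
  induction j with
  | zero => exact ⟨hΦi, hΦs⟩
  | succ j ih =>
    have heq : convPow Φ (j + 1)
        = convolution (convPow Φ j) Φ (ContinuousLinearMap.mul ℝ ℝ) volume := by
      funext x; simp [convPow, convolution_def]
    rw [heq]
    exact ⟨ih.1.integrable_convolution _ hΦi, HasCompactSupport.convolution (L := ContinuousLinearMap.mul ℝ ℝ) ih.2 hΦs⟩

noncomputable def mom {n : ℕ} (Φ : E n → ℝ) : ℕ → (Fin n → ℕ) → ℝ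
  | 0, a => if a = 0 then 1 else 0
  | j + 1, a => ∫ x : E n, P a x * convPow Φ j x

lemma momRec {Φ : E n → ℝ} (hΦi : Integrable Φ) (hΦs : HasCompactSupport Φ)
    (j : ℕ) (a : Fin n → ℕ) :
    mom Φ (j + 1) a = ∑ b ∈ Fintype.piFinset (fun i => range (a i + 1)),
      (∏ i, ((a i).choose (b i) : ℝ)) * (mom Φ j b * mom Φ 1 (a - b)) := by
  cases j with
  | zero =>
    rw [Finset.sum_eq_single (0 : Fin n → ℕ)]
    · simp [mom]
    · intro b _ hb; simp [mom, hb]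
    · intro h; exact absurd (by simp) h
  | succ j =>
    have h1 : mom Φ (j + 1 + 1) a
        = ∫ x : E n, P a x * (∫ y : E n, convPow Φ j y * Φ (x - y)) := rfl
    rw [h1, convMoment (convPow_props hΦi hΦs j).1 (convPow_props hΦi hΦs j).2 hΦi hΦs a]
    rfl

section main
variable {Φ : E n → ℝ} (hΦi : Integrable Φ) (hΦs : HasCompactSupport Φ)

lemma mom_one_zero (hint : ∫ x : E n, Φ x = 1) : mom Φ 1 (0 : Fin n → ℕ) = 1 := by
  have : mom Φ 1 (0 : Fin n → ℕ) = ∫ x : E n, Φ x := by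
    show (∫ x : E n, P 0 x * convPow Φ 0 x) = _
    simp [P, convPow]
  rw [this, hint]

lemma mom_one_first (hmom1 : ∀ a : Fin n → ℕ, (∑ i, a i) = 1 →
      ∫ x : Fin n → ℝ, (∏ i, x i ^ a i) * Φ x = 0)
    (c : Fin n → ℕ) (hc : ∑ i, c i = 1) : mom Φ 1 c = 0 := by
  have : mom Φ 1 c = ∫ x : E n, (∏ i, x i ^ c i) * Φ x := rfl
  rw [this, hmom1 c hc]

include hΦi hΦs in
lemma deltaLemma (hint : ∫ x : E n, Φ x = 1)
    (hmom1 : ∀ a : Fin n → ℕ, (∑ i, a i) = 1 →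
      ∫ x : Fin n → ℝ, (∏ i, x i ^ a i) * Φ x = 0) (j : ℕ) (a : Fin n → ℕ) :
    mom Φ (j + 1) a - mom Φ j a
      = ∑ b ∈ (Fintype.piFinset (fun i => range (a i + 1))).filter
          (fun b => 2 ≤ ∑ i, (a i - b i)),
          (∏ i, ((a i).choose (b i) : ℝ)) * (mom Φ j b * mom Φ 1 (a - b)) := by
  rw [momRec hΦi hΦs j a,
    ← Finset.sum_filter_add_sum_filter_not _ (fun b => 2 ≤ ∑ i, (a i - b i))]
  have h2 : ∑ b ∈ (Fintype.piFinset (fun i => range (a i + 1))).filter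
      (fun b => ¬ 2 ≤ ∑ i, (a i - b i)),
      (∏ i, ((a i).choose (b i) : ℝ)) * (mom Φ j b * mom Φ 1 (a - b)) = mom Φ j a := by
    refine Finset.sum_eq_single_of_mem a (by simp) ?_ |>.trans ?_
    · intro b hb hne
      simp only [Finset.mem_filter, Fintype.mem_piFinset, Finset.mem_range] at hb
      have hble : ∀ i, b i ≤ a i := fun i => Nat.lt_succ_iff.mp (hb.1 i)
      have hsum : ∑ i, (a i - b i) ≤ 1 := by omega
      have hne0 : ∑ i, (a i - b i) ≠ 0 := by
        intro h0
        apply hne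
        funext i
        have h3 := Finset.sum_eq_zero_iff.mp h0 i (Finset.mem_univ i)
        have h4 := hble i
        omega
      have h1 : ∑ i, ((a - b) i) = 1 := by
        simp only [Pi.sub_apply]; omega
      rw [mom_one_first hmom1 (a - b) h1, mul_zero, mul_zero]
    · have : a - a = (0 : Fin n → ℕ) := by funext i; simp
      simp [this, mom_one_zero hint]
  rw [h2]
  ring

include hΦi hΦs in
lemma Dvanish (hint : ∫ x : E n, Φ x = 1)
    (hmom1 : ∀ a : Fin n → ℕ, (∑ i, a i) = 1 →
      ∫ x : Fin n → ℝ, (∏ i, x i ^ a i) * Φ x = 0) :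
    ∀ k, ∀ a : Fin n → ℕ, (∑ i, a i) < 2 * k →
      (fwdDiff 1)^[k] (fun j => mom Φ j a) 0 = 0 := by
  intro k
  induction k with
  | zero => intro a ha; omega
  | succ k ih =>
    intro a ha
    rw [Function.iterate_succ_apply]
    have hΔ : fwdDiff 1 (fun j => mom Φ j a)
        = ∑ b ∈ (Fintype.piFinset (fun i => range (a i + 1))).filter
            (fun b => 2 ≤ ∑ i, (a i - b i)),
            ((∏ i, ((a i).choose (b i) : ℝ)) * mom Φ 1 (a - b)) • (fun j => mom Φ j b) := by
      funext j
      rw [fwdDiff]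
      rw [deltaLemma hΦi hΦs hint hmom1 j a]
      rw [Finset.sum_apply]
      refine Finset.sum_congr rfl fun b _ => ?_
      simp [smul_eq_mul]
      ring
    rw [hΔ, fwdDiff_iter_finset_sum]
    rw [Finset.sum_apply]
    refine Finset.sum_eq_zero fun b hb => ?_
    rw [fwdDiff_iter_const_smul, Pi.smul_apply, smul_eq_mul]
    simp only [Finset.mem_filter, Fintype.mem_piFinset, Finset.mem_range] at hb
    have hble : ∀ i, b i ≤ a i := fun i => Nat.lt_succ_iff.mp (hb.1 i)
    have hsplit : ∑ i, b i + ∑ i, (a i - b i) = ∑ i, a i := by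
      rw [← Finset.sum_add_distrib]
      exact Finset.sum_congr rfl fun i _ => by have := hble i; omega
    have he2 : 2 ≤ ∑ i, (a i - b i) := hb.2
    have h6 : ∑ i, b i + 2 ≤ ∑ i, a i := by
      rw [← hsplit]; exact Nat.add_le_add_left he2 _
    have hlt : ∑ i, b i < 2 * k := by omega
    rw [ih b hlt, mul_zero]
end main

section main2
variable {Φ : E n → ℝ} (hΦi : Integrable Φ) (hΦs : HasCompactSupport Φ)

include hΦi hΦs in
lemma keySum (hint : ∫ x : E n, Φ x = 1)
    (hmom1 : ∀ a : Fin n → ℕ, (∑ i, a i) = 1 →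
      ∫ x : Fin n → ℝ, (∏ i, x i ^ a i) * Φ x = 0)
    (k : ℕ) (a : Fin n → ℕ) (h : ∑ i, a i < 2 * k) :
    -∑ j ∈ Finset.Icc 1 k, (-1:ℝ)^j * (k.choose j) * mom Φ j a = mom Φ 0 a := by
  have hv := Dvanish hΦi hΦs hint hmom1 k a h
  rw [fwdDiff_iter_eq_sum_shift] at hv
  have h0 : ∑ j ∈ range (k+1), (-1:ℝ)^j * (k.choose j) * mom Φ j a = 0 := by
    have hmul := congrArg (fun t => (-1:ℝ)^k * t) hv
    simp only [mul_zero] at hmul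
    rw [Finset.mul_sum] at hmul
    rw [← hmul]
    refine Finset.sum_congr rfl fun j hj => ?_
    have hjk : j ≤ k := Nat.lt_succ_iff.mp (Finset.mem_range.mp hj)
    have hpow : (-1:ℝ)^(k-j) * (-1:ℝ)^j = (-1:ℝ)^k := by
      rw [← pow_add]; congr 1; omega
    have harg : 0 + j • 1 = j := by simp
    rw [harg, zsmul_eq_mul]
    push_cast
    rw [← hpow]
    ring_nf
    have h1 : ((-1:ℝ)) ^ ((k - j) * 2) = 1 := by
      rw [mul_comm (k-j) 2, pow_mul]; norm_num
    rw [h1, mul_one]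
  have hsplit : range (k+1) = insert 0 (Finset.Icc 1 k) := by
    ext x; simp [Nat.lt_succ_iff]; omega
  rw [hsplit, Finset.sum_insert (by simp)] at h0
  simp only [pow_zero, Nat.choose_zero_right, Nat.cast_one, one_mul, mul_one] at h0
  linarith

end main2

lemma intK {Φ : E n → ℝ} (hΦi : Integrable Φ) (hΦs : HasCompactSupport Φ)
    (k : ℕ) (a : Fin n → ℕ) :
    ∫ x : E n, P a x * Kkernel Φ k x
      = -∑ j ∈ Finset.Icc 1 k, (-1:ℝ)^j * (k.choose j) * mom Φ j a := by
  have h1 : (fun x : E n => P a x * Kkernel Φ k x)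
      = fun x => -∑ j ∈ Finset.Icc 1 k,
          ((-1:ℝ)^j * (k.choose j)) * (P a x * convPow Φ (j-1) x) := by
    funext x
    unfold Kkernel
    rw [mul_neg, Finset.mul_sum]
    congr 1
    exact Finset.sum_congr rfl fun j _ => by ring
  rw [h1, integral_neg, integral_finset_sum _ (fun j _ =>
    ((polyMulInt (convPow_props hΦi hΦs (j-1)).1 (convPow_props hΦi hΦs (j-1)).2 a).const_mul _))]
  congr 1
  refine Finset.sum_congr rfl fun j hj => ?_
  rw [integral_const_mul, mul_assoc]
  rw [mul_assoc]
  congr 2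
  obtain ⟨m, rfl⟩ : ∃ m, j = m + 1 :=
    ⟨j - 1, by have := (Finset.mem_Icc.mp hj).1; omega⟩
  show (∫ x : E n, P a x * convPow Φ m x) = mom Φ (m+1) a
  rfl


/-- If `Φ` is bounded, compactly supported, with `∫ Φ = 1` and vanishing first
moments, then `∫ K^{(k)} = 1` and all moments of `K^{(k)}` of order `1 ≤ |a| ≤ 2k-1`
vanish. -/
theorem kernel_moments (n k : ℕ) (hk : 1 ≤ k) (Φ : (Fin n → ℝ) → ℝ)
    (hmeas : Measurable Φ) (hbd : ∃ M, ∀ x, |Φ x| ≤ M) (hsupp : HasCompactSupport Φ)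
    (hint : ∫ x : Fin n → ℝ, Φ x = 1)
    (hmom1 : ∀ a : Fin n → ℕ, (∑ i, a i) = 1 →
      ∫ x : Fin n → ℝ, (∏ i, x i ^ a i) * Φ x = 0) :
    (∫ x : Fin n → ℝ, Kkernel Φ k x = 1) ∧
    (∀ a : Fin n → ℕ, 1 ≤ ∑ i, a i → (∑ i, a i) ≤ 2 * k - 1 →
      ∫ x : Fin n → ℝ, (∏ i, x i ^ a i) * Kkernel Φ k x = 0) := by
  obtain ⟨M, hM⟩ := hbd
  have hΦi : Integrable Φ := bddInt hmeas M hM hsupp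
  constructor
  · have h1 := keySum hΦi hsupp hint hmom1 k (0 : Fin n → ℕ)
      (by simp; omega)
    have h2 := intK hΦi hsupp k (0 : Fin n → ℕ)
    have h3 : (∫ x : E n, Kkernel Φ k x) = ∫ x : E n, P 0 x * Kkernel Φ k x := by
      congr 1; funext x; simp [P]
    rw [h3, h2, h1]
    show (if (0 : Fin n → ℕ) = 0 then (1:ℝ) else 0) = 1
    simp
  · intro a ha1 ha2
    have hlt : ∑ i, a i < 2 * k := by omega
    have ha0 : a ≠ 0 := by
      intro h; rw [h] at ha1; simpa using ha1
    have hgoal : (∫ x : Fin n → ℝ, (∏ i, x i ^ a i) * Kkernel Φ k x)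
        = ∫ x : E n, P a x * Kkernel Φ k x := rfl
    rw [hgoal, intK hΦi hsupp k a, keySum hΦi hsupp hint hmom1 k a hlt]
    show (if a = 0 then (1:ℝ) else 0) = 0
    simp [ha0]
end

section
/- Polar coordinates for non-isotropic dilations in a special case: for P = diag(1,2) on ℝ², δ_t = diag(t,t²), γ = 3, and every f ∈ L¹(ℝ²), ∫_{ℝ²} f(x)dx = ∫₀^∞ ∫_{S¹} f(δ_t θ) t^{γ−1} s(θ) dσ(θ) dt, where s(θ) = θ₁² + 2θ₂² for θ = (θ₁,θ₂) ∈ S¹. -/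
open MeasureTheory
open Real Set

noncomputable section ParabolicAux

/-- The shear map `(x, y) ↦ (x, y √(x²+y²))`. -/
def pShear : ℝ × ℝ → ℝ × ℝ := fun v => (v.1, v.2 * Real.sqrt (v.1 ^ 2 + v.2 ^ 2))

/-- Its derivative. -/
def pShearDeriv (p : ℝ × ℝ) : ℝ × ℝ →L[ℝ] ℝ × ℝ :=
  LinearMap.toContinuousLinearMap (Matrix.toLin (Module.Basis.finTwoProd ℝ) (Module.Basis.finTwoProd ℝ)
    !![(1 : ℝ), 0;
       p.2 * (p.1 / Real.sqrt (p.1 ^ 2 + p.2 ^ 2)),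
       Real.sqrt (p.1 ^ 2 + p.2 ^ 2) + p.2 * (p.2 / Real.sqrt (p.1 ^ 2 + p.2 ^ 2))])

lemma pSq_pos {p : ℝ × ℝ} (hp : p ≠ 0) : 0 < p.1 ^ 2 + p.2 ^ 2 := by
  have h : ¬(p.1 = 0 ∧ p.2 = 0) := by
    simpa [Prod.ext_iff] using hp
  rcases not_and_or.1 h with h | h
  · positivity
  · positivity

lemma pSqrt_pos {p : ℝ × ℝ} (hp : p ≠ 0) : 0 < Real.sqrt (p.1 ^ 2 + p.2 ^ 2) :=
  Real.sqrt_pos.2 (pSq_pos hp)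

lemma hasFDerivAt_pShear {p : ℝ × ℝ} (hp : p ≠ 0) : HasFDerivAt pShear (pShearDeriv p) p := by
  have h0 : p.1 ^ 2 + p.2 ^ 2 ≠ 0 := (pSq_pos hp).ne'
  have hS : HasFDerivAt (fun v : ℝ × ℝ => v.1 ^ 2 + v.2 ^ 2)
      ((p.1 • ContinuousLinearMap.fst ℝ ℝ ℝ + p.1 • ContinuousLinearMap.fst ℝ ℝ ℝ) +
        (p.2 • ContinuousLinearMap.snd ℝ ℝ ℝ + p.2 • ContinuousLinearMap.snd ℝ ℝ ℝ)) p := by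
    have := ((hasFDerivAt_fst (𝕜 := ℝ)).mul (hasFDerivAt_fst (𝕜 := ℝ) (p := p))).add
      ((hasFDerivAt_snd (𝕜 := ℝ)).mul (hasFDerivAt_snd (𝕜 := ℝ) (p := p)))
    have hfun : (fun v : ℝ × ℝ => v.1 ^ 2 + v.2 ^ 2) = Prod.fst * Prod.fst + Prod.snd * Prod.snd := by
      funext v
      simp [pow_two]
    rw [hfun]
    exact this
  have hsq := (Real.hasDerivAt_sqrt h0).comp_hasFDerivAt p hS
  have h := HasFDerivAt.prodMk (hasFDerivAt_fst (𝕜 := ℝ)) ((hasFDerivAt_snd (𝕜 := ℝ)).mul hsq)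
  refine h.congr_fderiv ?_
  unfold pShearDeriv
  rw [Matrix.toLin_finTwoProd_toContinuousLinearMap]
  apply ContinuousLinearMap.ext
  rintro ⟨a, b⟩
  have hs : Real.sqrt (p.1 ^ 2 + p.2 ^ 2) ≠ 0 := (pSqrt_pos hp).ne'
  have hmul' : Real.sqrt (p.1 ^ 2 + p.2 ^ 2) * Real.sqrt (p.1 ^ 2 + p.2 ^ 2)
      = p.1 ^ 2 + p.2 ^ 2 := Real.mul_self_sqrt (by positivity)
  have heq : Real.sqrt (p.2 ^ 2 + p.1 ^ 2) = Real.sqrt (p.1 ^ 2 + p.2 ^ 2) := by rw [add_comm]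
  apply Prod.ext
  · simp [ContinuousLinearMap.prod_apply, ContinuousLinearMap.smul_apply]
  · simp only [ContinuousLinearMap.prod_apply, ContinuousLinearMap.add_apply,
      ContinuousLinearMap.smul_apply, ContinuousLinearMap.coe_fst', ContinuousLinearMap.coe_snd',
      Function.comp_apply, smul_eq_mul]
    set s := Real.sqrt (p.1 ^ 2 + p.2 ^ 2) with hsdef
    field_simp
    try ring

lemma pShearDeriv_det {p : ℝ × ℝ} (hp : p ≠ 0) :
    |(pShearDeriv p).det| = (p.1 ^ 2 + 2 * p.2 ^ 2) / Real.sqrt (p.1 ^ 2 + p.2 ^ 2) := by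
  have hs : 0 < Real.sqrt (p.1 ^ 2 + p.2 ^ 2) := pSqrt_pos hp
  have hmul : Real.sqrt (p.1 ^ 2 + p.2 ^ 2) * Real.sqrt (p.1 ^ 2 + p.2 ^ 2) = p.1 ^ 2 + p.2 ^ 2 :=
    Real.mul_self_sqrt (by positivity)
  have hdet : (pShearDeriv p).det =
      Real.sqrt (p.1 ^ 2 + p.2 ^ 2) + p.2 * (p.2 / Real.sqrt (p.1 ^ 2 + p.2 ^ 2)) := by
    simp only [pShearDeriv, LinearMap.det_toContinuousLinearMap, LinearMap.det_toLin,
      Matrix.det_fin_two_of]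
    ring
  have h22 : p.2 * (p.2 / Real.sqrt (p.1 ^ 2 + p.2 ^ 2)) = p.2 ^ 2 / Real.sqrt (p.1 ^ 2 + p.2 ^ 2) := by
    ring
  have hnum : p.1 ^ 2 + 2 * p.2 ^ 2 =
      Real.sqrt (p.1 ^ 2 + p.2 ^ 2) * Real.sqrt (p.1 ^ 2 + p.2 ^ 2) + p.2 ^ 2 := by
    rw [hmul]; ring
  rw [hdet, abs_of_nonneg (by rw [h22]; positivity), h22, hnum, add_div, mul_self_div_self]


lemma pSq_pos' {x y : ℝ} (hp : ((x, y) : ℝ × ℝ) ≠ 0) : 0 < x ^ 2 + y ^ 2 := by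
  have h : ¬(x = 0 ∧ y = 0) := by simpa [Prod.ext_iff] using hp
  rcases not_and_or.1 h with h | h
  · positivity
  · positivity

lemma pSqrt_pos' {x y : ℝ} (hp : ((x, y) : ℝ × ℝ) ≠ 0) : 0 < Real.sqrt (x ^ 2 + y ^ 2) :=
  Real.sqrt_pos.2 (pSq_pos' hp)

set_option maxHeartbeats 1000000 in
lemma pShear_injOn : Set.InjOn pShear {(0 : ℝ × ℝ)}ᶜ := by
  rintro ⟨x, y⟩ hp ⟨x', y'⟩ hq h
  have hp' : ((x, y) : ℝ × ℝ) ≠ 0 := by simpa using hp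
  have hq' : ((x', y') : ℝ × ℝ) ≠ 0 := by simpa using hq
  simp only [pShear, Prod.mk.injEq] at h
  obtain ⟨h1, h2⟩ := h
  subst h1
  have hs1 : 0 < Real.sqrt (x ^ 2 + y ^ 2) := pSqrt_pos' hp'
  have hs2 : 0 < Real.sqrt (x ^ 2 + y' ^ 2) := pSqrt_pos' hq'
  have hm1 : Real.sqrt (x ^ 2 + y ^ 2) ^ 2 = x ^ 2 + y ^ 2 :=
    Real.sq_sqrt (by positivity)
  have hm2 : Real.sqrt (x ^ 2 + y' ^ 2) ^ 2 = x ^ 2 + y' ^ 2 :=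
    Real.sq_sqrt (by positivity)
  have hsq : y ^ 2 * (x ^ 2 + y ^ 2) = y' ^ 2 * (x ^ 2 + y' ^ 2) := by
    have := congrArg (fun t : ℝ => t ^ 2) h2
    simp only [mul_pow] at this
    calc y ^ 2 * (x ^ 2 + y ^ 2) = y ^ 2 * Real.sqrt (x ^ 2 + y ^ 2) ^ 2 := by rw [hm1]
    _ = y' ^ 2 * Real.sqrt (x ^ 2 + y' ^ 2) ^ 2 := this
    _ = y' ^ 2 * (x ^ 2 + y' ^ 2) := by rw [hm2]
  have hpos : 0 < x ^ 2 + y ^ 2 + y' ^ 2 := by nlinarith [pSq_pos' hp', sq_nonneg y']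
  have hyy : y ^ 2 = y' ^ 2 := by
    have h3 : (y ^ 2 - y' ^ 2) * (x ^ 2 + y ^ 2 + y' ^ 2) = 0 := by linear_combination hsq
    rcases mul_eq_zero.1 h3 with h4 | h4
    · linarith
    · linarith
  have hss : Real.sqrt (x ^ 2 + y ^ 2) = Real.sqrt (x ^ 2 + y' ^ 2) := by rw [hyy]
  rw [← hss] at h2
  have : y = y' := mul_right_cancel₀ hs1.ne' h2
  simp [this]

lemma pShear_surj {x z : ℝ} (h : ((x, z) : ℝ × ℝ) ≠ 0) :
    ∃ y : ℝ, ((x, y) : ℝ × ℝ) ≠ 0 ∧ y * Real.sqrt (x ^ 2 + y ^ 2) = z := by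
  set R := Real.sqrt (x ^ 4 + 4 * z ^ 2) with hRdef
  have hR2 : R * R = x ^ 4 + 4 * z ^ 2 := Real.mul_self_sqrt (by positivity)
  have hR0 : 0 ≤ R := Real.sqrt_nonneg _
  have hRx : x ^ 2 ≤ R := by nlinarith [sq_nonneg (R - x ^ 2), sq_nonneg (R + x ^ 2)]
  have hA : (0 : ℝ) ≤ (R - x ^ 2) / 2 := by linarith
  set w := Real.sqrt ((R - x ^ 2) / 2) with hwdef
  have hw0 : 0 ≤ w := Real.sqrt_nonneg _
  have hw2 : w ^ 2 = (R - x ^ 2) / 2 := Real.sq_sqrt hA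
  have hB : x ^ 2 + w ^ 2 = (R + x ^ 2) / 2 := by rw [hw2]; ring
  have hABz : (R - x ^ 2) / 2 * ((R + x ^ 2) / 2) = z ^ 2 := by linear_combination hR2 / 4
  have key : w * Real.sqrt (x ^ 2 + w ^ 2) = |z| := by
    rw [hB, hwdef, ← Real.sqrt_mul hA, hABz, Real.sqrt_sq_eq_abs]
  have hne : ∀ y : ℝ, |y| = w → ((x, y) : ℝ × ℝ) ≠ 0 := by
    intro y hy h0
    rw [Prod.ext_iff] at h0
    obtain ⟨hx0, hy0⟩ := h0
    simp only at hx0 hy0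
    subst hx0; subst hy0
    simp at hy
    have : |z| = 0 := by rw [← key, ← hy]; ring
    have hz : z = 0 := abs_eq_zero.1 this
    exact h (by simp [hz])
  rcases le_or_gt 0 z with hz | hz
  · refine ⟨w, hne w (abs_of_nonneg hw0), ?_⟩
    rw [key, abs_of_nonneg hz]
  · refine ⟨-w, hne (-w) (by rw [abs_neg, abs_of_nonneg hw0]), ?_⟩
    have : (-w) * Real.sqrt (x ^ 2 + (-w) ^ 2) = -(w * Real.sqrt (x ^ 2 + w ^ 2)) := by
      rw [neg_sq]; ring
    rw [this, key, abs_of_neg hz]; ring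

lemma pShear_image : pShear '' {(0 : ℝ × ℝ)}ᶜ = {(0 : ℝ × ℝ)}ᶜ := by
  apply Set.Subset.antisymm
  · rintro q ⟨p, hp, rfl⟩
    simp only [Set.mem_compl_iff, Set.mem_singleton_iff] at hp ⊢
    intro h0
    apply hp
    have h1 : p.1 = 0 := congrArg Prod.fst h0
    have h2 : p.2 * Real.sqrt (p.1 ^ 2 + p.2 ^ 2) = 0 := congrArg Prod.snd h0
    rw [h1] at h2
    have : p.2 = 0 := by
      rcases mul_eq_zero.1 h2 with h | h
      · exact h
      · have := Real.sqrt_eq_zero (by positivity) |>.1 h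
        nlinarith [sq_nonneg p.2]
    exact Prod.ext h1 this
  · rintro ⟨x, z⟩ hq
    simp only [Set.mem_compl_iff, Set.mem_singleton_iff] at hq
    obtain ⟨y, hy0, hy⟩ := pShear_surj hq
    exact ⟨(x, y), hy0, by simp [pShear, hy]⟩

/-- The integrand after the shear change of variables. -/
def pF (f : ℝ × ℝ → ℝ) : ℝ × ℝ → ℝ := fun p =>
  f (pShear p) * ((p.1 ^ 2 + 2 * p.2 ^ 2) / Real.sqrt (p.1 ^ 2 + p.2 ^ 2))

/-- The integrand in parabolic polar coordinates. -/
def pG (f : ℝ × ℝ → ℝ) : ℝ × ℝ → ℝ := fun p =>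
  f (p.1 * Real.cos p.2, p.1 ^ 2 * Real.sin p.2) *
    (p.1 ^ 2 * (Real.cos p.2 ^ 2 + 2 * Real.sin p.2 ^ 2))

lemma pFG (f : ℝ × ℝ → ℝ) {p : ℝ × ℝ} (hr : 0 < p.1) :
    p.1 • pF f (polarCoord.symm p) = pG f p := by
  obtain ⟨r, θ⟩ := p
  simp only at hr
  simp only [pF, pG, pShear, polarCoord_symm_apply]
  have hsq : (r * Real.cos θ) ^ 2 + (r * Real.sin θ) ^ 2 = r ^ 2 := by
    linear_combination (r ^ 2) * Real.sin_sq_add_cos_sq θ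
  rw [hsq, Real.sqrt_sq hr.le,
    show r * Real.sin θ * r = r ^ 2 * Real.sin θ by ring, smul_eq_mul,
    show ((r * Real.cos θ) ^ 2 + 2 * (r * Real.sin θ) ^ 2) / r =
      r * ((Real.cos θ) ^ 2 + 2 * (Real.sin θ) ^ 2) by field_simp]
  ring

lemma polarB_det (p : ℝ × ℝ) :
    (LinearMap.toContinuousLinearMap (Matrix.toLin (Module.Basis.finTwoProd ℝ) (Module.Basis.finTwoProd ℝ)
      !![Real.cos p.2, -p.1 * Real.sin p.2;
         Real.sin p.2, p.1 * Real.cos p.2])).det = p.1 := by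
  conv_rhs => rw [← one_mul p.1, ← Real.cos_sq_add_sin_sq p.2]
  simp only [neg_mul, LinearMap.det_toContinuousLinearMap, LinearMap.det_toLin,
    Matrix.det_fin_two_of, sub_neg_eq_add]
  ring

end ParabolicAux

/-- Polar coordinates for the non-isotropic dilations `δ_t = diag(t, t²)` on `ℝ²`
(`γ = trace P = 3`): for every integrable `f`,
`∫_{ℝ²} f = ∫₀^∞ ∫_{S¹} f(δ_t θ) t^{γ-1} s(θ) dσ(θ) dt` with
`s(θ) = θ₁² + 2θ₂²`, the circle being parametrized by arc length. -/
theorem parabolic_polar_coordinates (f : ℝ × ℝ → ℝ)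
    (hf : Integrable f (volume : Measure (ℝ × ℝ))) :
    ∫ x : ℝ × ℝ, f x =
      ∫ t in Set.Ioi (0 : ℝ), ∫ u in (0 : ℝ)..(2 * Real.pi),
        f (t * Real.cos u, t ^ 2 * Real.sin u) *
          (t ^ (3 - 1 : ℕ) * ((Real.cos u) ^ 2 + 2 * (Real.sin u) ^ 2)) := by
  have hs : MeasurableSet ({(0 : ℝ × ℝ)}ᶜ) := (measurableSet_singleton 0).compl
  have hae : ({(0 : ℝ × ℝ)}ᶜ : Set (ℝ × ℝ)) =ᵐ[volume] Set.univ := by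
    rw [ae_eq_univ, compl_compl,
      show ({(0 : ℝ × ℝ)} : Set (ℝ × ℝ)) = {(0 : ℝ)} ×ˢ {(0 : ℝ)} by
        rw [Set.singleton_prod_singleton, Prod.mk_zero_zero],
      Measure.volume_eq_prod, Measure.prod_prod, Real.volume_singleton, mul_zero]
  have hder : ∀ p ∈ ({(0 : ℝ × ℝ)}ᶜ : Set (ℝ × ℝ)),
      HasFDerivWithinAt pShear (pShearDeriv p) ({(0 : ℝ × ℝ)}ᶜ : Set (ℝ × ℝ)) p := fun p hp =>
    (hasFDerivAt_pShear (Set.mem_compl_singleton_iff.mp hp)).hasFDerivWithinAt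
  have hdet : ∀ p ∈ ({(0 : ℝ × ℝ)}ᶜ : Set (ℝ × ℝ)),
      |(pShearDeriv p).det| • f (pShear p) = pF f p := by
    intro p hp
    rw [pShearDeriv_det (Set.mem_compl_singleton_iff.mp hp), smul_eq_mul, pF, mul_comm]
  -- step 1 : shear change of variables
  have e1 : ∫ x, f x = ∫ p, pF f p := by
    rw [← setIntegral_univ (f := f), ← setIntegral_congr_set hae,
      ← pShear_image,
      integral_image_eq_integral_abs_det_fderiv_smul volume hs hder pShear_injOn f,
      setIntegral_congr_fun hs hdet, setIntegral_congr_set hae, setIntegral_univ]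
  -- integrability of pF
  have hF_int : Integrable (pF f) volume := by
    have h1 : IntegrableOn f (pShear '' {(0 : ℝ × ℝ)}ᶜ) volume := by
      rw [pShear_image]; exact hf.integrableOn
    have h2 := (integrableOn_image_iff_integrableOn_abs_det_fderiv_smul volume hs hder
      pShear_injOn f).1 h1
    have h3 : IntegrableOn (pF f) {(0 : ℝ × ℝ)}ᶜ volume := h2.congr_fun hdet hs
    rw [← integrableOn_univ]
    exact h3.congr_set_ae hae.symm
  -- step 2 : ordinary polar coordinates
  have e2 : ∫ p, pF f p = ∫ p in polarCoord.target, pG f p := by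
    rw [← integral_comp_polarCoord_symm (pF f)]
    exact setIntegral_congr_fun polarCoord.open_target.measurableSet
      fun p hp => pFG f hp.1
  -- integrability of pG on the target
  have hG_int : IntegrableOn (pG f) polarCoord.target volume := by
    have hBder : ∀ p ∈ polarCoord.target,
        HasFDerivWithinAt polarCoord.symm
          (LinearMap.toContinuousLinearMap (Matrix.toLin (Module.Basis.finTwoProd ℝ)
            (Module.Basis.finTwoProd ℝ)
            !![Real.cos p.2, -p.1 * Real.sin p.2;
               Real.sin p.2, p.1 * Real.cos p.2])) polarCoord.target p := fun p _ =>
      (hasFDerivAt_polarCoord_symm p).hasFDerivWithinAt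
    have hFsrc : IntegrableOn (pF f) (polarCoord.symm '' polarCoord.target) volume := by
      rw [polarCoord.symm_image_target_eq_source]
      exact hF_int.integrableOn
    have h4 := (integrableOn_image_iff_integrableOn_abs_det_fderiv_smul volume
      polarCoord.open_target.measurableSet hBder polarCoord.symm.injOn (pF f)).1 hFsrc
    refine h4.congr_fun (fun p hp => ?_) polarCoord.open_target.measurableSet
    dsimp only
    rw [polarB_det, abs_of_pos hp.1]
    exact pFG f hp.1
  -- step 3 : Fubini
  have e3 : ∫ p in polarCoord.target, pG f p =
      ∫ r in Set.Ioi (0 : ℝ), ∫ θ in Set.Ioo (-Real.pi) Real.pi, pG f (r, θ) := by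
    rw [polarCoord_target] at hG_int ⊢
    rw [Measure.volume_eq_prod] at hG_int ⊢
    exact setIntegral_prod _ hG_int
  -- step 4 : periodic shift of the angular variable
  have e4 : ∀ r : ℝ, ∫ θ in Set.Ioo (-Real.pi) Real.pi, pG f (r, θ) =
      ∫ u in (0 : ℝ)..(2 * Real.pi),
        f (r * Real.cos u, r ^ 2 * Real.sin u) *
          (r ^ (3 - 1 : ℕ) * ((Real.cos u) ^ 2 + 2 * (Real.sin u) ^ 2)) := by
    intro r
    have hper : Function.Periodic
        (fun u : ℝ => f (r * Real.cos u, r ^ 2 * Real.sin u) *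
          (r ^ 2 * ((Real.cos u) ^ 2 + 2 * (Real.sin u) ^ 2))) (2 * Real.pi) := by
      intro u
      simp [Real.cos_add_two_pi, Real.sin_add_two_pi]
    have hshift := hper.intervalIntegral_add_eq 0 (-Real.pi)
    rw [zero_add, show -Real.pi + 2 * Real.pi = Real.pi by ring] at hshift
    have hle : -Real.pi ≤ Real.pi := by linarith [Real.pi_pos]
    calc ∫ θ in Set.Ioo (-Real.pi) Real.pi, pG f (r, θ)
        = ∫ θ in (-Real.pi)..Real.pi,
            f (r * Real.cos θ, r ^ 2 * Real.sin θ) *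
              (r ^ 2 * ((Real.cos θ) ^ 2 + 2 * (Real.sin θ) ^ 2)) := by
          rw [intervalIntegral.integral_of_le hle, integral_Ioc_eq_integral_Ioo]
          rfl
      _ = ∫ u in (0 : ℝ)..(2 * Real.pi),
            f (r * Real.cos u, r ^ 2 * Real.sin u) *
              (r ^ 2 * ((Real.cos u) ^ 2 + 2 * (Real.sin u) ^ 2)) := hshift.symm
      _ = ∫ u in (0 : ℝ)..(2 * Real.pi),
            f (r * Real.cos u, r ^ 2 * Real.sin u) *
              (r ^ (3 - 1 : ℕ) * ((Real.cos u) ^ 2 + 2 * (Real.sin u) ^ 2)) := by norm_num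
  rw [e1, e2, e3]
  exact setIntegral_congr_fun measurableSet_Ioi fun r _ => e4 r
end
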